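/- Fixed-design random coefficient clustered model with bounded design growth: suppose λ_max(X_gᵀX_g) ≤ c·N_g and λ_max(Ω_g) ≤ C·N_g for all g, the error vectors ε_g are mutually independent with mean zero and Cov(ε_g) = Ω_g, and the u_g are mutually independent, independent of all the ε's, with E[u_g] = 0 and Cov(u_g) = Δ. Then E‖(Σ_{g=1}^G X_gᵀε_g + Σ_{g=1}^G X_gᵀX_g u_g)/(Σ_{g=1}^G N_g)‖² ≤ k(cC + c² λ_max(Δ)) · (Σ_{g=1}^G N_g²)/(Σ_{g=1}^G N_g)². In particular, along any sequence of such models in which max_g N_g/Σ_g N_g → 0, the normalized score (Σ_g X_gᵀη_g)/(Σ_g N_g), with η_g = X_g u_g + ε_g, converges to 0 in L² and hence in probability. -/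

import Mathlib

open MeasureTheory ProbabilityTheory Matrix Filter

/-- Largest eigenvalue of a real symmetric matrix via the Rayleigh quotient. -/
noncomputable def lamMax {n : ℕ} (S : Matrix (Fin n) (Fin n) ℝ) : ℝ :=
  ⨆ v : {v : Fin n → ℝ // ∑ i, v i ^ 2 = 1}, v.1 ⬝ᵥ S.mulVec v.1

section Helpers

lemma rayleigh_bdd {n : ℕ} (S : Matrix (Fin n) (Fin n) ℝ) :
    BddAbove (Set.range fun v : {v : Fin n → ℝ // ∑ i, v i ^ 2 = 1} =>
      v.1 ⬝ᵥ S.mulVec v.1) := by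
  refine ⟨∑ i, ∑ j, |S i j|, ?_⟩
  rintro x ⟨⟨v, hv⟩, rfl⟩
  have hvb : ∀ i, |v i| ≤ 1 := by
    intro i
    have h1 : v i ^ 2 ≤ 1 := by
      rw [← hv]
      exact Finset.single_le_sum (fun j _ => sq_nonneg (v j)) (Finset.mem_univ i)
    nlinarith [abs_nonneg (v i), sq_abs (v i)]
  simp only [dotProduct, mulVec, Finset.mul_sum]
  refine Finset.sum_le_sum fun i _ => Finset.sum_le_sum fun j _ => ?_
  calc v i * (S i j * v j) ≤ |v i * (S i j * v j)| := le_abs_self _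
    _ = |v i| * |S i j| * |v j| := by rw [abs_mul, abs_mul]; ring
    _ ≤ 1 * |S i j| * 1 := by
        have := abs_nonneg (S i j)
        apply mul_le_mul (mul_le_mul (hvb i) le_rfl this (by norm_num)) (hvb j)
          (abs_nonneg _)
        positivity
    _ = |S i j| := by ring

lemma quadform_le_lamMax {n : ℕ} (S : Matrix (Fin n) (Fin n) ℝ) (v : Fin n → ℝ)
    (hv : ∑ i, v i ^ 2 = 1) : v ⬝ᵥ S.mulVec v ≤ lamMax S :=
  le_ciSup (rayleigh_bdd S) ⟨v, hv⟩

lemma quadform_le {n : ℕ} (S : Matrix (Fin n) (Fin n) ℝ) (v : Fin n → ℝ) :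
    v ⬝ᵥ S.mulVec v ≤ lamMax S * ∑ i, v i ^ 2 := by
  rcases eq_or_ne (∑ i, v i ^ 2) 0 with h0 | h0
  · have hz : ∀ i, v i = 0 := by
      intro i
      have := (Finset.sum_eq_zero_iff_of_nonneg (fun j _ => sq_nonneg (v j))).1 h0 i
        (Finset.mem_univ i)
      exact pow_eq_zero_iff (by norm_num) |>.1 this
    have : v = 0 := funext hz
    simp [this, h0]
  · have hpos : 0 < ∑ i, v i ^ 2 :=
      lt_of_le_of_ne (Finset.sum_nonneg fun j _ => sq_nonneg (v j)) (Ne.symm h0)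
    set t := Real.sqrt (∑ i, v i ^ 2) with ht
    have htpos : 0 < t := Real.sqrt_pos.2 hpos
    have ht2 : t ^ 2 = ∑ i, v i ^ 2 := Real.sq_sqrt hpos.le
    have hw : ∑ i, (t⁻¹ • v) i ^ 2 = 1 := by
      simp only [Pi.smul_apply, smul_eq_mul, mul_pow, ← Finset.mul_sum]
      rw [← ht2]; field_simp
    have h := quadform_le_lamMax S (t⁻¹ • v) hw
    have hq : (t⁻¹ • v) ⬝ᵥ S.mulVec (t⁻¹ • v) = t⁻¹ * (t⁻¹ * (v ⬝ᵥ S.mulVec v)) := by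
      rw [Matrix.mulVec_smul, dotProduct_smul, smul_dotProduct]
      simp [smul_eq_mul]
    rw [hq] at h
    have := mul_le_mul_of_nonneg_left h (le_of_lt (by positivity : (0:ℝ) < t ^ 2))
    calc v ⬝ᵥ S.mulVec v = t ^ 2 * (t⁻¹ * (t⁻¹ * (v ⬝ᵥ S.mulVec v))) := by
          field_simp
      _ ≤ t ^ 2 * lamMax S := this
      _ = lamMax S * ∑ i, v i ^ 2 := by rw [ht2]; ring

lemma psd_cs {n : ℕ} (M : Matrix (Fin n) (Fin n) ℝ) (hsym : Mᵀ = M)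
    (hpsd : ∀ x : Fin n → ℝ, 0 ≤ x ⬝ᵥ M.mulVec x) (v w : Fin n → ℝ) :
    (w ⬝ᵥ M.mulVec v) ^ 2 ≤ (w ⬝ᵥ M.mulVec w) * (v ⬝ᵥ M.mulVec v) := by
  have hsymm : ∀ a b : Fin n → ℝ, a ⬝ᵥ M.mulVec b = b ⬝ᵥ M.mulVec a := fun a b => by
    rw [Matrix.dotProduct_mulVec, ← Matrix.mulVec_transpose, hsym, dotProduct_comm]
  have key : ∀ t : ℝ, 0 ≤ (w ⬝ᵥ M.mulVec w) * t ^ 2 + (2 * (w ⬝ᵥ M.mulVec v)) * t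
      + (v ⬝ᵥ M.mulVec v) := by
    intro t
    have h := hpsd (v + t • w)
    rw [add_dotProduct] at h
    have : v ⬝ᵥ M.mulVec (v + t • w) + (t • w) ⬝ᵥ M.mulVec (v + t • w)
        = (w ⬝ᵥ M.mulVec w) * t ^ 2 + (2 * (w ⬝ᵥ M.mulVec v)) * t + (v ⬝ᵥ M.mulVec v) := by
      rw [Matrix.mulVec_add, dotProduct_add, dotProduct_add,
        smul_dotProduct, smul_dotProduct, Matrix.mulVec_smul,
        dotProduct_smul, dotProduct_smul, hsymm v w]
      simp only [smul_eq_mul]; ring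
    linarith [this ▸ h]
  have key' : ∀ t : ℝ, 0 ≤ (w ⬝ᵥ M.mulVec w) * (t * t) + (2 * (w ⬝ᵥ M.mulVec v)) * t
      + (v ⬝ᵥ M.mulVec v) := fun t => by have := key t; nlinarith [this]
  have hd := discrim_le_zero key'
  simp only [discrim] at hd
  nlinarith [hd]

lemma mulVec_norm_sq_le {n : ℕ} (M : Matrix (Fin n) (Fin n) ℝ) (hsym : Mᵀ = M)
    (hpsd : ∀ x : Fin n → ℝ, 0 ≤ x ⬝ᵥ M.mulVec x) (L : ℝ) (hL : 0 ≤ L)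
    (hlam : ∀ x : Fin n → ℝ, x ⬝ᵥ M.mulVec x ≤ L * ∑ i, x i ^ 2) (v : Fin n → ℝ) :
    ∑ i, (M.mulVec v i) ^ 2 ≤ L ^ 2 * ∑ i, v i ^ 2 := by
  set w := M.mulVec v with hw
  have hww : ∑ i, w i ^ 2 = w ⬝ᵥ M.mulVec v := by
    simp [dotProduct, ← hw, pow_two]
  have hcs := psd_cs M hsym hpsd v w
  have h1 : w ⬝ᵥ M.mulVec w ≤ L * ∑ i, w i ^ 2 := hlam w
  have h2 : v ⬝ᵥ M.mulVec v ≤ L * ∑ i, v i ^ 2 := hlam v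
  have hwnn : 0 ≤ ∑ i, w i ^ 2 := Finset.sum_nonneg fun i _ => sq_nonneg _
  have hvnn : 0 ≤ ∑ i, v i ^ 2 := Finset.sum_nonneg fun i _ => sq_nonneg _
  rcases eq_or_lt_of_le hwnn with h0 | h0
  · rw [← h0]; positivity
  · have key : (∑ i, w i ^ 2) ^ 2 ≤ (L * ∑ i, w i ^ 2) * (L * ∑ i, v i ^ 2) := by
      calc (∑ i, w i ^ 2) ^ 2 = (w ⬝ᵥ M.mulVec v) ^ 2 := by rw [hww]
        _ ≤ (w ⬝ᵥ M.mulVec w) * (v ⬝ᵥ M.mulVec v) := hcs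
        _ ≤ (L * ∑ i, w i ^ 2) * (L * ∑ i, v i ^ 2) := by
            apply mul_le_mul h1 h2 (hpsd v) (by positivity)
    nlinarith [key]

variable {Ωs : Type*} [MeasurableSpace Ωs] (μ : Measure Ωs)

lemma memL2_of_sq {f : Ωs → ℝ} (hm : Measurable f) (hi : Integrable (fun ω => f ω ^ 2) μ) :
    MemLp f 2 μ :=
  (memLp_two_iff_integrable_sq hm.aestronglyMeasurable).2 hi

lemma int_mul_of_L2 {f g : Ωs → ℝ} (hf : MemLp f 2 μ) (hg : MemLp g 2 μ) :
    Integrable (fun ω => f ω * g ω) μ := by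
  have h : MemLp (f • g) 1 μ :=
    hg.smul hf
  exact memLp_one_iff_integrable.1 h

lemma int_lincomb_mul {n m : ℕ} (c : Fin n → ℝ) (d : Fin m → ℝ)
    (f : Ωs → Fin n → ℝ) (g : Ωs → Fin m → ℝ)
    (hint : ∀ p q, Integrable (fun ω => f ω p * g ω q) μ) :
    ∫ ω, (∑ p, c p * f ω p) * (∑ q, d q * g ω q) ∂μ
      = ∑ p, ∑ q, c p * d q * ∫ ω, f ω p * g ω q ∂μ := by
  have hpt : ∀ ω, (∑ p, c p * f ω p) * (∑ q, d q * g ω q)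
      = ∑ p, ∑ q, c p * d q * (f ω p * g ω q) := by
    intro ω; rw [Finset.sum_mul_sum]
    exact Finset.sum_congr rfl fun p _ => Finset.sum_congr rfl fun q _ => by ring
  simp_rw [hpt]
  rw [integral_finset_sum _ fun p _ => integrable_finset_sum _
    fun q _ => ((hint p q).const_mul _)]
  refine Finset.sum_congr rfl fun p _ => ?_
  rw [integral_finset_sum _ fun q _ => ((hint p q).const_mul _)]
  exact Finset.sum_congr rfl fun q _ => integral_const_mul _ _

lemma int_mul_add_add {f1 f2 g1 g2 : Ωs → ℝ}
    (h11 : Integrable (fun ω => f1 ω * g1 ω) μ)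
    (h12 : Integrable (fun ω => f1 ω * g2 ω) μ)
    (h21 : Integrable (fun ω => f2 ω * g1 ω) μ)
    (h22 : Integrable (fun ω => f2 ω * g2 ω) μ) :
    ∫ ω, (f1 ω + f2 ω) * (g1 ω + g2 ω) ∂μ
      = (∫ ω, f1 ω * g1 ω ∂μ) + (∫ ω, f1 ω * g2 ω ∂μ)
        + (∫ ω, f2 ω * g1 ω ∂μ) + (∫ ω, f2 ω * g2 ω ∂μ) := by
  have hpt : (fun ω => (f1 ω + f2 ω) * (g1 ω + g2 ω))
      = fun ω => f1 ω * g1 ω + f1 ω * g2 ω + f2 ω * g1 ω + f2 ω * g2 ω :=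
    funext fun ω => by ring
  have hA : Integrable (fun ω => f1 ω * g1 ω + f1 ω * g2 ω) μ := h11.add h12
  have hB : Integrable (fun ω => f1 ω * g1 ω + f1 ω * g2 ω + f2 ω * g1 ω) μ := hA.add h21
  rw [hpt, integral_add hB h22, integral_add hA h21, integral_add h11 h12]

lemma int_sum_sq_eq {k G : ℕ} (s : Fin G → Fin k → Ωs → ℝ)
    (hint : ∀ g h i, Integrable (fun ω => s g i ω * s h i ω) μ)
    (hzero : ∀ g h i, g ≠ h → ∫ ω, s g i ω * s h i ω ∂μ = 0) :
    ∫ ω, ∑ i, (∑ g, s g i ω) ^ 2 ∂μ = ∑ g, ∑ i, ∫ ω, s g i ω * s g i ω ∂μ := by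
  have hpt : ∀ ω, ∑ i, (∑ g, s g i ω) ^ 2 = ∑ i, ∑ g, ∑ h, s g i ω * s h i ω := by
    intro ω; refine Finset.sum_congr rfl fun i _ => ?_
    rw [pow_two, Finset.sum_mul_sum]
  simp_rw [hpt]
  rw [integral_finset_sum _ fun i _ => integrable_finset_sum _
    fun g _ => integrable_finset_sum _ fun h _ => hint g h i]
  have hstep : ∀ i : Fin k, ∫ ω, ∑ g, ∑ h, s g i ω * s h i ω ∂μ
      = ∑ g, ∑ h, ∫ ω, s g i ω * s h i ω ∂μ := by
    intro i
    rw [integral_finset_sum _ fun g _ => integrable_finset_sum _ fun h _ => hint g h i]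
    exact Finset.sum_congr rfl fun g _ =>
      integral_finset_sum _ fun h _ => hint g h i
  simp_rw [hstep]
  rw [Finset.sum_comm]
  refine Finset.sum_congr rfl fun g _ => Finset.sum_congr rfl fun i _ => ?_
  rw [Finset.sum_eq_single g (fun h _ hgh => hzero g h i (Ne.symm hgh)) (by simp)]

/-- The per-`G` quantitative bound, with all probabilistic input abstracted into
covariance identities. -/
lemma part1 {Ωs : Type*} [MeasurableSpace Ωs] (μ : Measure Ωs)
    {k G : ℕ} (c C lamΔ n : ℝ) (hc : 0 < c) (hC : 0 < C) (hlamΔ : 0 ≤ lamΔ)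
    (N : Fin G → ℕ)
    (X : (g : Fin G) → Matrix (Fin (N g)) (Fin k) ℝ)
    (ε : (g : Fin G) → Ωs → Fin (N g) → ℝ) (u : (g : Fin G) → Ωs → Fin k → ℝ)
    (memε : ∀ g p, MemLp (fun ω => ε g ω p) 2 μ)
    (memu : ∀ g j, MemLp (fun ω => u g ω j) 2 μ)
    (covεε : ∀ (g h : Fin G) p q, g ≠ h → ∫ ω, ε g ω p * ε h ω q ∂μ = 0)
    (covuu : ∀ (g h : Fin G) p q, g ≠ h → ∫ ω, u g ω p * u h ω q ∂μ = 0)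
    (covεu : ∀ (g h : Fin G) p j, ∫ ω, ε g ω p * u h ω j ∂μ = 0)
    (Ωm : (g : Fin G) → Matrix (Fin (N g)) (Fin (N g)) ℝ)
    (hΩ : ∀ g p q, Ωm g p q = ∫ ω, ε g ω p * ε g ω q ∂μ)
    (Δ : Matrix (Fin k) (Fin k) ℝ)
    (hΔ : ∀ g p q, ∫ ω, u g ω p * u g ω q ∂μ = Δ p q)
    (hΔquad : ∀ v : Fin k → ℝ, v ⬝ᵥ Δ.mulVec v ≤ lamΔ * ∑ i, v i ^ 2)
    (hXq : ∀ (g : Fin G) (x : Fin k → ℝ),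
      x ⬝ᵥ ((X g)ᵀ * X g).mulVec x ≤ (c * (N g : ℝ)) * ∑ i, x i ^ 2)
    (hΩq : ∀ (g : Fin G) (x : Fin (N g) → ℝ),
      x ⬝ᵥ (Ωm g).mulVec x ≤ (C * (N g : ℝ)) * ∑ i, x i ^ 2) :
    ∫ ω, ∑ i, (n⁻¹ * ∑ g, ((∑ p, X g p i * ε g ω p)
        + ∑ j, ((X g)ᵀ * X g) i j * u g ω j)) ^ 2 ∂μ

      ≤ (k : ℝ) * (c * C + c ^ 2 * lamΔ) * (∑ g, (N g : ℝ) ^ 2) / n ^ 2 := by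
  -- abbreviations (inline throughout)
  have memA : ∀ (g : Fin G) (i : Fin k),
      MemLp (fun ω => ∑ p, X g p i * ε g ω p) 2 μ :=
    fun g i => memLp_finset_sum _ fun p _ => (memε g p).const_mul _
  have memB : ∀ (g : Fin G) (i : Fin k),
      MemLp (fun ω => ∑ j, ((X g)ᵀ * X g) i j * u g ω j) 2 μ :=
    fun g i => memLp_finset_sum _ fun j _ => (memu g j).const_mul _
  have memS : ∀ (g : Fin G) (i : Fin k),
      MemLp (fun ω => (∑ p, X g p i * ε g ω p)
        + ∑ j, ((X g)ᵀ * X g) i j * u g ω j) 2 μ :=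
    fun g i => (memA g i).add (memB g i)
  have intεε' : ∀ (g h : Fin G) p q, Integrable (fun ω => ε g ω p * ε h ω q) μ :=
    fun g h p q => int_mul_of_L2 μ (memε g p) (memε h q)
  have intεu' : ∀ (g h : Fin G) p j, Integrable (fun ω => ε g ω p * u h ω j) μ :=
    fun g h p j => int_mul_of_L2 μ (memε g p) (memu h j)
  have intuε' : ∀ (g h : Fin G) j p, Integrable (fun ω => u g ω j * ε h ω p) μ :=
    fun g h j p => int_mul_of_L2 μ (memu g j) (memε h p)
  have intuu' : ∀ (g h : Fin G) j l, Integrable (fun ω => u g ω j * u h ω l) μ :=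
    fun g h j l => int_mul_of_L2 μ (memu g j) (memu h l)
  have covuε : ∀ (g h : Fin G) j p, ∫ ω, u g ω j * ε h ω p ∂μ = 0 := by
    intro g h j p
    have : (fun ω => u g ω j * ε h ω p) = fun ω => ε h ω p * u g ω j :=
      funext fun ω => mul_comm _ _
    rw [this]; exact covεu h g p j
  have intAA : ∀ (g h : Fin G) i, Integrable (fun ω =>
      (∑ p, X g p i * ε g ω p) * (∑ q, X h q i * ε h ω q)) μ :=
    fun g h i => int_mul_of_L2 μ (memA g i) (memA h i)
  have intAB : ∀ (g h : Fin G) i, Integrable (fun ω =>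
      (∑ p, X g p i * ε g ω p) * (∑ l, ((X h)ᵀ * X h) i l * u h ω l)) μ :=
    fun g h i => int_mul_of_L2 μ (memA g i) (memB h i)
  have intBA : ∀ (g h : Fin G) i, Integrable (fun ω =>
      (∑ j, ((X g)ᵀ * X g) i j * u g ω j) * (∑ q, X h q i * ε h ω q)) μ :=
    fun g h i => int_mul_of_L2 μ (memB g i) (memA h i)
  have intBB : ∀ (g h : Fin G) i, Integrable (fun ω =>
      (∑ j, ((X g)ᵀ * X g) i j * u g ω j) * (∑ l, ((X h)ᵀ * X h) i l * u h ω l)) μ :=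
    fun g h i => int_mul_of_L2 μ (memB g i) (memB h i)
  have intSS : ∀ (g h : Fin G) (i : Fin k), Integrable (fun ω =>
      ((∑ p, X g p i * ε g ω p) + ∑ j, ((X g)ᵀ * X g) i j * u g ω j)
      * ((∑ q, X h q i * ε h ω q) + ∑ l, ((X h)ᵀ * X h) i l * u h ω l)) μ :=
    fun g h i => int_mul_of_L2 μ (memS g i) (memS h i)
  -- the four building-block integral expansions
  have Iaa : ∀ (g h : Fin G) i, ∫ ω,
      (∑ p, X g p i * ε g ω p) * (∑ q, X h q i * ε h ω q) ∂μ
      = ∑ p, ∑ q, X g p i * X h q i * ∫ ω, ε g ω p * ε h ω q ∂μ :=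
    fun g h i => int_lincomb_mul μ _ _ _ _ (fun p q => intεε' g h p q)
  have Iab : ∀ (g h : Fin G) i, ∫ ω,
      (∑ p, X g p i * ε g ω p) * (∑ l, ((X h)ᵀ * X h) i l * u h ω l) ∂μ
      = ∑ p, ∑ l, X g p i * ((X h)ᵀ * X h) i l * ∫ ω, ε g ω p * u h ω l ∂μ :=
    fun g h i => int_lincomb_mul μ _ _ _ _ (fun p l => intεu' g h p l)
  have Iba : ∀ (g h : Fin G) i, ∫ ω,
      (∑ j, ((X g)ᵀ * X g) i j * u g ω j) * (∑ q, X h q i * ε h ω q) ∂μ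
      = ∑ j, ∑ q, ((X g)ᵀ * X g) i j * X h q i * ∫ ω, u g ω j * ε h ω q ∂μ :=
    fun g h i => int_lincomb_mul μ _ _ _ _ (fun j q => intuε' g h j q)
  have Ibb : ∀ (g h : Fin G) i, ∫ ω,
      (∑ j, ((X g)ᵀ * X g) i j * u g ω j) * (∑ l, ((X h)ᵀ * X h) i l * u h ω l) ∂μ
      = ∑ j, ∑ l, ((X g)ᵀ * X g) i j * ((X h)ᵀ * X h) i l * ∫ ω, u g ω j * u h ω l ∂μ :=
    fun g h i => int_lincomb_mul μ _ _ _ _ (fun j l => intuu' g h j l)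
  -- off-diagonal cluster products integrate to zero
  have Issz : ∀ (g h : Fin G) (i : Fin k), g ≠ h → ∫ ω,
      ((∑ p, X g p i * ε g ω p) + ∑ j, ((X g)ᵀ * X g) i j * u g ω j)
      * ((∑ q, X h q i * ε h ω q) + ∑ l, ((X h)ᵀ * X h) i l * u h ω l) ∂μ = 0 := by
    intro g h i hgh
    rw [int_mul_add_add μ (intAA g h i) (intAB g h i) (intBA g h i) (intBB g h i),
      Iaa g h i, Iab g h i, Iba g h i, Ibb g h i]
    have z1 : (∑ p, ∑ q, X g p i * X h q i * ∫ ω, ε g ω p * ε h ω q ∂μ) = 0 :=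
      Finset.sum_eq_zero fun p _ => Finset.sum_eq_zero fun q _ => by
        rw [covεε g h p q hgh, mul_zero]
    have z2 : (∑ p, ∑ l, X g p i * ((X h)ᵀ * X h) i l * ∫ ω, ε g ω p * u h ω l ∂μ) = 0 :=
      Finset.sum_eq_zero fun p _ => Finset.sum_eq_zero fun l _ => by
        rw [covεu g h p l, mul_zero]
    have z3 : (∑ j, ∑ q, ((X g)ᵀ * X g) i j * X h q i * ∫ ω, u g ω j * ε h ω q ∂μ) = 0 :=
      Finset.sum_eq_zero fun j _ => Finset.sum_eq_zero fun q _ => by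
        rw [covuε g h j q, mul_zero]
    have z4 : (∑ j, ∑ l, ((X g)ᵀ * X g) i j * ((X h)ᵀ * X h) i l
        * ∫ ω, u g ω j * u h ω l ∂μ) = 0 :=
      Finset.sum_eq_zero fun j _ => Finset.sum_eq_zero fun l _ => by
        rw [covuu g h j l hgh, mul_zero]
    rw [z1, z2, z3, z4]; ring
  -- diagonal terms
  have Issd : ∀ (g : Fin G) (i : Fin k), ∫ ω,
      ((∑ p, X g p i * ε g ω p) + ∑ j, ((X g)ᵀ * X g) i j * u g ω j)
      * ((∑ q, X g q i * ε g ω q) + ∑ l, ((X g)ᵀ * X g) i l * u g ω l) ∂μ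
      = (∑ p, ∑ q, X g p i * X g q i * Ωm g p q)
        + ∑ j, ∑ l, ((X g)ᵀ * X g) i j * ((X g)ᵀ * X g) i l * Δ j l := by
    intro g i
    rw [int_mul_add_add μ (intAA g g i) (intAB g g i) (intBA g g i) (intBB g g i),
      Iaa g g i, Iab g g i, Iba g g i, Ibb g g i]
    have z2 : (∑ p, ∑ l, X g p i * ((X g)ᵀ * X g) i l * ∫ ω, ε g ω p * u g ω l ∂μ) = 0 :=
      Finset.sum_eq_zero fun p _ => Finset.sum_eq_zero fun l _ => by
        rw [covεu g g p l, mul_zero]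
    have z3 : (∑ j, ∑ q, ((X g)ᵀ * X g) i j * X g q i * ∫ ω, u g ω j * ε g ω q ∂μ) = 0 :=
      Finset.sum_eq_zero fun j _ => Finset.sum_eq_zero fun q _ => by
        rw [covuε g g j q, mul_zero]
    have e1 : (∑ p, ∑ q, X g p i * X g q i * ∫ ω, ε g ω p * ε g ω q ∂μ)
        = ∑ p, ∑ q, X g p i * X g q i * Ωm g p q :=
      Finset.sum_congr rfl fun p _ => Finset.sum_congr rfl fun q _ => by
        rw [← hΩ g p q]
    have e4 : (∑ j, ∑ l, ((X g)ᵀ * X g) i j * ((X g)ᵀ * X g) i l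
        * ∫ ω, u g ω j * u g ω l ∂μ)
        = ∑ j, ∑ l, ((X g)ᵀ * X g) i j * ((X g)ᵀ * X g) i l * Δ j l :=
      Finset.sum_congr rfl fun j _ => Finset.sum_congr rfl fun l _ => by
        rw [hΔ g j l]
    rw [e1, z2, z3, e4]; ring
  -- per-cluster deterministic bound on the diagonal
  have hdiagbound : ∀ g : Fin G,
      (∑ i, ((∑ p, ∑ q, X g p i * X g q i * Ωm g p q)
        + ∑ j, ∑ l, ((X g)ᵀ * X g) i j * ((X g)ᵀ * X g) i l * Δ j l))
      ≤ (k : ℝ) * (c * C + c ^ 2 * lamΔ) * (N g : ℝ) ^ 2 := by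
    intro g
    have hMsym : ((X g)ᵀ * X g)ᵀ = (X g)ᵀ * X g := by
      rw [Matrix.transpose_mul, Matrix.transpose_transpose]
    have hMsym' : ∀ i j : Fin k, ((X g)ᵀ * X g) j i = ((X g)ᵀ * X g) i j := by
      intro i j
      conv_lhs => rw [← hMsym]
      exact Matrix.transpose_apply _ j i
    have hMpsd : ∀ x : Fin k → ℝ, 0 ≤ x ⬝ᵥ ((X g)ᵀ * X g).mulVec x := by
      intro x
      rw [← Matrix.mulVec_mulVec, Matrix.dotProduct_mulVec, Matrix.vecMul_transpose]
      exact Finset.sum_nonneg fun p _ => mul_self_nonneg _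
    have hsingle : ∀ i : Fin k, ∑ j, (Pi.single i 1 : Fin k → ℝ) j ^ 2 = 1 := by
      intro i
      rw [Finset.sum_eq_single i (fun j _ hj => by simp [Pi.single_apply, hj])
        (fun h => absurd (Finset.mem_univ i) h)]
      simp
    have hdiagM : ∀ i : Fin k, ((X g)ᵀ * X g) i i ≤ c * (N g : ℝ) := by
      intro i
      have hq : (Pi.single i 1 : Fin k → ℝ) ⬝ᵥ
          ((X g)ᵀ * X g).mulVec (Pi.single i 1) = ((X g)ᵀ * X g) i i := by
        simp [dotProduct, mulVec, Pi.single_apply]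
      have h := hXq g (Pi.single i 1)
      rw [hq, hsingle i, mul_one] at h
      exact h
    have hsumsq : ∀ i : Fin k, (∑ p, X g p i ^ 2) = ((X g)ᵀ * X g) i i := by
      intro i
      rw [Matrix.mul_apply]
      exact Finset.sum_congr rfl fun p _ => by
        rw [Matrix.transpose_apply, pow_two]
    have hT1sum : (∑ i, ∑ p, ∑ q, X g p i * X g q i * Ωm g p q)
        ≤ (k : ℝ) * (c * C) * (N g : ℝ) ^ 2 := by
      have hT1i : ∀ i : Fin k, (∑ p, ∑ q, X g p i * X g q i * Ωm g p q)
          ≤ (C * (N g : ℝ)) * ∑ p, X g p i ^ 2 := by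
        intro i
        have hform : (∑ p, ∑ q, X g p i * X g q i * Ωm g p q)
            = (fun p => X g p i) ⬝ᵥ (Ωm g).mulVec (fun p => X g p i) := by
          simp only [dotProduct, mulVec, Finset.mul_sum]
          exact Finset.sum_congr rfl fun p _ => Finset.sum_congr rfl fun q _ => by ring
        rw [hform]
        exact hΩq g (fun p => X g p i)
      calc (∑ i, ∑ p, ∑ q, X g p i * X g q i * Ωm g p q)
          ≤ ∑ i, (C * (N g : ℝ)) * ∑ p, X g p i ^ 2 :=
            Finset.sum_le_sum fun i _ => hT1i i
        _ = (C * (N g : ℝ)) * ∑ i, ∑ p, X g p i ^ 2 := by rw [Finset.mul_sum]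
        _ ≤ (C * (N g : ℝ)) * ∑ _i : Fin k, (c * (N g : ℝ)) := by
            refine mul_le_mul_of_nonneg_left (Finset.sum_le_sum fun i _ => ?_)
              (by positivity)
            rw [hsumsq i]; exact hdiagM i
        _ = (k : ℝ) * (c * C) * (N g : ℝ) ^ 2 := by
            rw [Finset.sum_const, Finset.card_univ, Fintype.card_fin, nsmul_eq_mul]
            ring
    have hT2sum : (∑ i, ∑ j, ∑ l, ((X g)ᵀ * X g) i j * ((X g)ᵀ * X g) i l * Δ j l)
        ≤ (k : ℝ) * (c ^ 2 * lamΔ) * (N g : ℝ) ^ 2 := by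
      have hT2i : ∀ i : Fin k, (∑ j, ∑ l, ((X g)ᵀ * X g) i j * ((X g)ᵀ * X g) i l * Δ j l)
          ≤ lamΔ * (c ^ 2 * (N g : ℝ) ^ 2) := by
        intro i
        have hform2 : (∑ j, ∑ l, ((X g)ᵀ * X g) i j * ((X g)ᵀ * X g) i l * Δ j l)
            = (fun j => ((X g)ᵀ * X g) i j) ⬝ᵥ Δ.mulVec (fun j => ((X g)ᵀ * X g) i j) := by
          simp only [dotProduct, mulVec, Finset.mul_sum]
          exact Finset.sum_congr rfl fun j _ => Finset.sum_congr rfl fun l _ => by ring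
        have hrow : ∀ j : Fin k, ((X g)ᵀ * X g).mulVec (Pi.single i 1) j
            = ((X g)ᵀ * X g) i j := by
          intro j
          simp [mulVec, dotProduct, Pi.single_apply]
          exact hMsym' i j
        calc (∑ j, ∑ l, ((X g)ᵀ * X g) i j * ((X g)ᵀ * X g) i l * Δ j l)
            = (fun j => ((X g)ᵀ * X g) i j) ⬝ᵥ Δ.mulVec (fun j => ((X g)ᵀ * X g) i j) :=
              hform2
          _ ≤ lamΔ * ∑ j, ((X g)ᵀ * X g) i j ^ 2 := hΔquad _
          _ = lamΔ * ∑ j, (((X g)ᵀ * X g).mulVec (Pi.single i 1) j) ^ 2 := by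
              congr 1
              exact Finset.sum_congr rfl fun j _ => by rw [hrow j]
          _ ≤ lamΔ * ((c * (N g : ℝ)) ^ 2 * ∑ j, (Pi.single i 1 : Fin k → ℝ) j ^ 2) :=
              mul_le_mul_of_nonneg_left
                (mulVec_norm_sq_le _ hMsym hMpsd (c * (N g : ℝ))
                  (by positivity) (hXq g) _) hlamΔ
          _ = lamΔ * (c ^ 2 * (N g : ℝ) ^ 2) := by rw [hsingle i]; ring
      calc (∑ i, ∑ j, ∑ l, ((X g)ᵀ * X g) i j * ((X g)ᵀ * X g) i l * Δ j l)
          ≤ ∑ _i : Fin k, lamΔ * (c ^ 2 * (N g : ℝ) ^ 2) :=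
            Finset.sum_le_sum fun i _ => hT2i i
        _ = (k : ℝ) * (c ^ 2 * lamΔ) * (N g : ℝ) ^ 2 := by
            rw [Finset.sum_const, Finset.card_univ, Fintype.card_fin, nsmul_eq_mul]
            ring
    calc (∑ i, ((∑ p, ∑ q, X g p i * X g q i * Ωm g p q)
          + ∑ j, ∑ l, ((X g)ᵀ * X g) i j * ((X g)ᵀ * X g) i l * Δ j l))
        = (∑ i, ∑ p, ∑ q, X g p i * X g q i * Ωm g p q)
          + ∑ i, ∑ j, ∑ l, ((X g)ᵀ * X g) i j * ((X g)ᵀ * X g) i l * Δ j l :=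
          Finset.sum_add_distrib
      _ ≤ (k : ℝ) * (c * C) * (N g : ℝ) ^ 2 + (k : ℝ) * (c ^ 2 * lamΔ) * (N g : ℝ) ^ 2 :=
          add_le_add hT1sum hT2sum
      _ = (k : ℝ) * (c * C + c ^ 2 * lamΔ) * (N g : ℝ) ^ 2 := by ring
  -- assemble
  have step1 : (fun ω => ∑ i, (n⁻¹ * ∑ g, ((∑ p, X g p i * ε g ω p)
        + ∑ j, ((X g)ᵀ * X g) i j * u g ω j)) ^ 2)
      = fun ω => n⁻¹ ^ 2 * ∑ i, (∑ g, ((∑ p, X g p i * ε g ω p)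
        + ∑ j, ((X g)ᵀ * X g) i j * u g ω j)) ^ 2 :=
    funext fun ω => by
      rw [Finset.mul_sum]
      exact Finset.sum_congr rfl fun i _ => by ring
  calc ∫ ω, ∑ i, (n⁻¹ * ∑ g, ((∑ p, X g p i * ε g ω p)
        + ∑ j, ((X g)ᵀ * X g) i j * u g ω j)) ^ 2 ∂μ
      = n⁻¹ ^ 2 * ∫ ω, ∑ i, (∑ g, ((∑ p, X g p i * ε g ω p)
        + ∑ j, ((X g)ᵀ * X g) i j * u g ω j)) ^ 2 ∂μ := by
        rw [step1]; exact integral_const_mul _ _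
    _ = n⁻¹ ^ 2 * ∑ g, ∑ i, ∫ ω,
        (((∑ p, X g p i * ε g ω p) + ∑ j, ((X g)ᵀ * X g) i j * u g ω j)
        * ((∑ q, X g q i * ε g ω q) + ∑ l, ((X g)ᵀ * X g) i l * u g ω l)) ∂μ := by
        exact congrArg (fun z => n⁻¹ ^ 2 * z)
          (int_sum_sq_eq μ (fun g i ω => (∑ p, X g p i * ε g ω p)
            + ∑ j, ((X g)ᵀ * X g) i j * u g ω j) intSS Issz)
    _ = n⁻¹ ^ 2 * ∑ g, ∑ i, ((∑ p, ∑ q, X g p i * X g q i * Ωm g p q)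
        + ∑ j, ∑ l, ((X g)ᵀ * X g) i j * ((X g)ᵀ * X g) i l * Δ j l) := by
        exact congrArg (fun z => n⁻¹ ^ 2 * z)
          (Finset.sum_congr rfl fun g _ => Finset.sum_congr rfl fun i _ => Issd g i)
    _ ≤ n⁻¹ ^ 2 * ∑ g, (k : ℝ) * (c * C + c ^ 2 * lamΔ) * (N g : ℝ) ^ 2 := by
        refine mul_le_mul_of_nonneg_left (Finset.sum_le_sum fun g _ => hdiagbound g)
          (by positivity)
    _ = (k : ℝ) * (c * C + c ^ 2 * lamΔ) * (∑ g, (N g : ℝ) ^ 2) / n ^ 2 := by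
        rw [← Finset.mul_sum, div_eq_mul_inv, ← inv_pow]
        ring

end Helpers

/-- quantitative core of the paper's theorem on the
consistency of pooled OLS under random coefficients.  If
`λ_max(X_gᵀX_g) ≤ c·N_g` and `λ_max(Ω_g) ≤ C·N_g`, then the normalized pooled
OLS score `(∑_g X_gᵀε_g + ∑_g X_gᵀX_g u_g)/(∑_g N_g)` satisfies
`E‖·‖² ≤ k(cC + c²λ_max(Δ))·(∑N_g²)/(∑N_g)²`; in particular, along any
sequence with `max_g N_g/∑_g N_g → 0` it converges to `0` in `L²` and hence in
probability. -/
theorem stmt14 {Ωs : Type*} [MeasurableSpace Ωs] (μ : Measure Ωs) [IsProbabilityMeasure μ]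
    (k : ℕ) (c C : ℝ) (hc : 0 < c) (hC : 0 < C)
    (N : (G : ℕ) → Fin G → ℕ) (hN : ∀ G g, 1 ≤ N G g)
    (X : (G : ℕ) → (g : Fin G) → Matrix (Fin (N G g)) (Fin k) ℝ)
    (ε : (G : ℕ) → (g : Fin G) → Ωs → (Fin (N G g) → ℝ))
    (u : (G : ℕ) → (g : Fin G) → Ωs → (Fin k → ℝ))
    (hmeasε : ∀ G g, Measurable (ε G g)) (hmeasu : ∀ G g, Measurable (u G g))
    (hL2ε : ∀ G g i, Integrable (fun ω => (ε G g ω i) ^ 2) μ)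
    (hL2u : ∀ G g i, Integrable (fun ω => (u G g ω i) ^ 2) μ)
    (hmeanε : ∀ G g i, ∫ ω, ε G g ω i ∂μ = 0)
    (hmeanu : ∀ G g i, ∫ ω, u G g ω i ∂μ = 0)
    (hindepε : ∀ G, iIndepFun (ε G) μ)
    (hindepu : ∀ G, iIndepFun (u G) μ)
    (hindepεu : ∀ G, IndepFun (fun ω (g : Fin G) => ε G g ω)
                              (fun ω (g : Fin G) => u G g ω) μ)
    (Ωm : (G : ℕ) → (g : Fin G) → Matrix (Fin (N G g)) (Fin (N G g)) ℝ)
    (hΩ : ∀ G g i j, Ωm G g i j = ∫ ω, ε G g ω i * ε G g ω j ∂μ)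
    (Δ : Matrix (Fin k) (Fin k) ℝ)
    (hΔ : ∀ G g i j, ∫ ω, u G g ω i * u G g ω j ∂μ = Δ i j)
    (hXeig : ∀ G g, lamMax ((X G g)ᵀ * X G g) ≤ c * (N G g : ℝ))
    (hΩeig : ∀ G g, lamMax (Ωm G g) ≤ C * (N G g : ℝ))
    (score : (G : ℕ) → Ωs → (Fin k → ℝ))
    (hscore : ∀ G ω, score G ω =
      ((∑ g, (N G g : ℝ)))⁻¹ •
        ((∑ g, (X G g)ᵀ.mulVec (ε G g ω)) +
         ∑ g, ((X G g)ᵀ * X G g).mulVec (u G g ω))) :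
    (∀ G : ℕ, 1 ≤ G →
      ∫ ω, ∑ i, (score G ω i) ^ 2 ∂μ ≤
        (k : ℝ) * (c * C + c ^ 2 * lamMax Δ) *
          (∑ g, (N G g : ℝ) ^ 2) / (∑ g, (N G g : ℝ)) ^ 2) ∧
    (Tendsto (fun G : ℕ => (⨆ g, (N G g : ℝ)) / ∑ g, (N G g : ℝ)) atTop (nhds 0) →
      Tendsto (fun G : ℕ => ∫ ω, ∑ i, (score G ω i) ^ 2 ∂μ) atTop (nhds 0) ∧
      (∀ η : ℝ, 0 < η →
        Tendsto (fun G : ℕ => μ {ω | η ≤ Real.sqrt (∑ i, (score G ω i) ^ 2)})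
          atTop (nhds 0))) := by
  -- basic L² facts
  have memε' : ∀ (G : ℕ) (g : Fin G) p, MemLp (fun ω => ε G g ω p) 2 μ := fun G g p =>
    memL2_of_sq μ ((measurable_pi_apply p).comp (hmeasε G g)) (hL2ε G g p)
  have memu' : ∀ (G : ℕ) (g : Fin G) j, MemLp (fun ω => u G g ω j) 2 μ := fun G g j =>
    memL2_of_sq μ ((measurable_pi_apply j).comp (hmeasu G g)) (hL2u G g j)
  have intε : ∀ (G : ℕ) (g : Fin G) p, Integrable (fun ω => ε G g ω p) μ :=
    fun G g p => (memε' G g p).integrable one_le_two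
  have intu : ∀ (G : ℕ) (g : Fin G) j, Integrable (fun ω => u G g ω j) μ :=
    fun G g j => (memu' G g j).integrable one_le_two
  have intuu : ∀ (G : ℕ) (g h : Fin G) p q, Integrable (fun ω => u G g ω p * u G h ω q) μ :=
    fun G g h p q => int_mul_of_L2 μ (memu' G g p) (memu' G h q)
  -- covariance identities from independence
  have covεε : ∀ (G : ℕ) (g h : Fin G) p q, g ≠ h →
      ∫ ω, ε G g ω p * ε G h ω q ∂μ = 0 := by
    intro G g h p q hgh
    have hind : IndepFun (fun ω => ε G g ω p) (fun ω => ε G h ω q) μ :=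
      ((hindepε G).indepFun hgh).comp (measurable_pi_apply p) (measurable_pi_apply q)
    calc ∫ ω, ε G g ω p * ε G h ω q ∂μ
        = (∫ ω, ε G g ω p ∂μ) * ∫ ω, ε G h ω q ∂μ :=
          hind.integral_mul_eq_mul_integral (intε G g p).1 (intε G h q).1
      _ = 0 := by rw [hmeanε, zero_mul]
  have covuu : ∀ (G : ℕ) (g h : Fin G) p q, g ≠ h →
      ∫ ω, u G g ω p * u G h ω q ∂μ = 0 := by
    intro G g h p q hgh
    have hind : IndepFun (fun ω => u G g ω p) (fun ω => u G h ω q) μ :=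
      ((hindepu G).indepFun hgh).comp (measurable_pi_apply p) (measurable_pi_apply q)
    calc ∫ ω, u G g ω p * u G h ω q ∂μ
        = (∫ ω, u G g ω p ∂μ) * ∫ ω, u G h ω q ∂μ :=
          hind.integral_mul_eq_mul_integral (intu G g p).1 (intu G h q).1
      _ = 0 := by rw [hmeanu, zero_mul]
  have covεu : ∀ (G : ℕ) (g h : Fin G) p j,
      ∫ ω, ε G g ω p * u G h ω j ∂μ = 0 := by
    intro G g h p j
    have hind : IndepFun (fun ω => ε G g ω p) (fun ω => u G h ω j) μ :=
      (hindepεu G).comp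
        ((measurable_pi_apply p).comp (measurable_pi_apply g))
        ((measurable_pi_apply j).comp (measurable_pi_apply h))
    calc ∫ ω, ε G g ω p * u G h ω j ∂μ
        = (∫ ω, ε G g ω p ∂μ) * ∫ ω, u G h ω j ∂μ :=
          hind.integral_mul_eq_mul_integral (intε G g p).1 (intu G h j).1
      _ = 0 := by rw [hmeanε, zero_mul]
  -- Δ is positive semidefinite, hence lamMax Δ ≥ 0
  have hΔpsd : ∀ v : Fin k → ℝ, 0 ≤ v ⬝ᵥ Δ.mulVec v := by
    intro v
    have expand := int_lincomb_mul μ v v (u 1 0) (u 1 0) (fun p q => intuu 1 0 0 p q)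
    have h2 : v ⬝ᵥ Δ.mulVec v = ∫ ω, (∑ i, v i * u 1 0 ω i) ^ 2 ∂μ := by
      have hptw : (fun ω => (∑ i, v i * u 1 0 ω i) ^ 2)
          = fun ω => (∑ i, v i * u 1 0 ω i) * (∑ j, v j * u 1 0 ω j) :=
        funext fun ω => by rw [pow_two]
      rw [hptw, expand]
      simp only [dotProduct, mulVec, Finset.mul_sum]
      exact Finset.sum_congr rfl fun i _ => Finset.sum_congr rfl fun j _ => by
        rw [hΔ 1 0 i j]; ring
    rw [h2]
    exact integral_nonneg fun ω => sq_nonneg _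
  have hlamΔ : 0 ≤ lamMax Δ := by
    rcases Nat.eq_zero_or_pos k with hk | hk
    · subst hk
      have he : IsEmpty {v : Fin 0 → ℝ // ∑ i, v i ^ 2 = 1} := by
        refine ⟨fun x => ?_⟩
        have := x.2
        simp at this
      rw [lamMax, Real.iSup_of_isEmpty]
    · set i0 : Fin k := ⟨0, hk⟩
      have he : ∑ j, (Pi.single i0 1 : Fin k → ℝ) j ^ 2 = 1 := by
        rw [Finset.sum_eq_single i0 (fun j _ hj => by simp [Pi.single_apply, hj])
          (fun h => absurd (Finset.mem_univ i0) h)]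
        simp
      exact le_trans (hΔpsd (Pi.single i0 1)) (quadform_le_lamMax Δ _ he)
  -- quadratic-form versions of the eigenvalue hypotheses
  have hXq : ∀ (G : ℕ) (g : Fin G) (x : Fin k → ℝ),
      x ⬝ᵥ ((X G g)ᵀ * X G g).mulVec x ≤ (c * (N G g : ℝ)) * ∑ i, x i ^ 2 :=
    fun G g x => le_trans (quadform_le _ x)
      (mul_le_mul_of_nonneg_right (hXeig G g)
        (Finset.sum_nonneg fun i _ => sq_nonneg _))
  have hΩq : ∀ (G : ℕ) (g : Fin G) (x : Fin (N G g) → ℝ),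
      x ⬝ᵥ (Ωm G g).mulVec x ≤ (C * (N G g : ℝ)) * ∑ i, x i ^ 2 :=
    fun G g x => le_trans (quadform_le _ x)
      (mul_le_mul_of_nonneg_right (hΩeig G g)
        (Finset.sum_nonneg fun i _ => sq_nonneg _))
  -- the main quantitative bound for every G
  have key : ∀ G : ℕ, ∫ ω, ∑ i, (score G ω i) ^ 2 ∂μ ≤
      (k : ℝ) * (c * C + c ^ 2 * lamMax Δ) *
        (∑ g, (N G g : ℝ) ^ 2) / (∑ g, (N G g : ℝ)) ^ 2 := by
    intro G
    have hrw : (fun ω => ∑ i, (score G ω i) ^ 2)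
        = fun ω => ∑ i, ((∑ g, (N G g : ℝ))⁻¹ *
            ∑ g, ((∑ p, X G g p i * ε G g ω p)
              + ∑ j, ((X G g)ᵀ * X G g) i j * u G g ω j)) ^ 2 := by
      funext ω
      refine Finset.sum_congr rfl fun i _ => ?_
      rw [hscore G ω]
      simp only [Pi.smul_apply, smul_eq_mul, Pi.add_apply, Finset.sum_apply,
        Matrix.mulVec, dotProduct, Matrix.transpose_apply,
        ← Finset.sum_add_distrib]
    rw [hrw]
    exact part1 μ c C (lamMax Δ) _ hc hC hlamΔ (N G) (X G) (ε G) (u G)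
      (memε' G) (memu' G) (covεε G) (covuu G) (covεu G) (Ωm G) (hΩ G) Δ (hΔ G)
      (fun v => quadform_le Δ v) (hXq G) (hΩq G)
  constructor
  · exact fun G _ => key G
  · intro htend
    have hnn : ∀ G : ℕ, 0 ≤ ∫ ω, ∑ i, (score G ω i) ^ 2 ∂μ := fun G =>
      integral_nonneg fun ω => Finset.sum_nonneg fun i _ => sq_nonneg _
    have hK : 0 ≤ (k : ℝ) * (c * C + c ^ 2 * lamMax Δ) :=
      mul_nonneg (Nat.cast_nonneg k)
        (add_nonneg (mul_pos hc hC).le (mul_nonneg (sq_nonneg c) hlamΔ))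
    have hbound : ∀ G : ℕ, 1 ≤ G → ∫ ω, ∑ i, (score G ω i) ^ 2 ∂μ ≤
        ((k : ℝ) * (c * C + c ^ 2 * lamMax Δ)) *
          ((⨆ g, (N G g : ℝ)) / ∑ g, (N G g : ℝ)) := by
      intro G hG
      haveI : Nonempty (Fin G) := Fin.pos_iff_nonempty.1 hG
      have hnpos : 0 < ∑ g, (N G g : ℝ) :=
        Finset.sum_pos (fun g _ => by exact_mod_cast hN G g) Finset.univ_nonempty
      have hne : (∑ g, (N G g : ℝ)) ≠ 0 := ne_of_gt hnpos
      have hsupb : ∀ g : Fin G, (N G g : ℝ) ≤ ⨆ g', (N G g' : ℝ) := fun g =>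
        le_ciSup (f := fun g' : Fin G => (N G g' : ℝ))
          (Set.finite_range _).bddAbove g
      have h1 : (∑ g, (N G g : ℝ) ^ 2) ≤ (⨆ g', (N G g' : ℝ)) * ∑ g, (N G g : ℝ) := by
        rw [Finset.mul_sum]
        refine Finset.sum_le_sum fun g _ => ?_
        rw [pow_two]
        exact mul_le_mul_of_nonneg_right (hsupb g) (Nat.cast_nonneg _)
      refine (key G).trans ?_
      rw [mul_div_assoc]
      refine mul_le_mul_of_nonneg_left ?_ hK
      calc (∑ g, (N G g : ℝ) ^ 2) / (∑ g, (N G g : ℝ)) ^ 2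
          ≤ ((⨆ g', (N G g' : ℝ)) * ∑ g, (N G g : ℝ)) / (∑ g, (N G g : ℝ)) ^ 2 :=
            (div_le_div_iff_of_pos_right (by positivity)).2 h1
        _ = (⨆ g', (N G g' : ℝ)) / ∑ g, (N G g : ℝ) := by
            field_simp
    have hI0 : Tendsto (fun G : ℕ => ∫ ω, ∑ i, (score G ω i) ^ 2 ∂μ) atTop (nhds 0) := by
      refine squeeze_zero' (g := fun G : ℕ => ((k : ℝ) * (c * C + c ^ 2 * lamMax Δ)) *
          ((⨆ g, (N G g : ℝ)) / ∑ g, (N G g : ℝ)))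
        (Eventually.of_forall hnn) ?_ ?_
      · filter_upwards [eventually_ge_atTop 1] with G hG using hbound G hG
      · have := htend.const_mul ((k : ℝ) * (c * C + c ^ 2 * lamMax Δ))
        simpa using this
    refine ⟨hI0, ?_⟩
    intro η hη
    have memScore : ∀ (G : ℕ) (i : Fin k), MemLp (fun ω => score G ω i) 2 μ := by
      intro G i
      have h1 : (fun ω => score G ω i) = fun ω => (∑ g, (N G g : ℝ))⁻¹ *
          ((∑ g, ∑ p, X G g p i * ε G g ω p)
            + (∑ g, ∑ j, ((X G g)ᵀ * X G g) i j * u G g ω j)) := by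
        funext ω; rw [hscore G ω]
        simp only [Pi.smul_apply, smul_eq_mul, Pi.add_apply, Finset.sum_apply,
          Matrix.mulVec, dotProduct, Matrix.transpose_apply]
      rw [h1]
      exact (((memLp_finset_sum _ fun g _ => memLp_finset_sum _
          fun p _ => (memε' G g p).const_mul _).add
        (memLp_finset_sum _ fun g _ => memLp_finset_sum _
          fun j _ => (memu' G g j).const_mul _))).const_mul _
    have intS : ∀ G : ℕ, Integrable (fun ω => ∑ i, (score G ω i) ^ 2) μ := fun G =>
      integrable_finset_sum _ fun i _ => (memScore G i).integrable_sq
    have hseteq : ∀ G : ℕ, {ω | η ≤ Real.sqrt (∑ i, (score G ω i) ^ 2)}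
        = {ω | η ^ 2 ≤ ∑ i, (score G ω i) ^ 2} := by
      intro G; ext ω
      simp only [Set.mem_setOf_eq]
      have hS : 0 ≤ ∑ i, (score G ω i) ^ 2 := Finset.sum_nonneg fun i _ => sq_nonneg _
      constructor
      · intro h
        have h2 := pow_le_pow_left₀ hη.le h 2
        rwa [Real.sq_sqrt hS] at h2
      · intro h
        have h2 := Real.sqrt_le_sqrt h
        rwa [Real.sqrt_sq hη.le] at h2
    have hmark : ∀ G : ℕ, (μ {ω | η ^ 2 ≤ ∑ i, (score G ω i) ^ 2}).toReal ≤
        (∫ ω, ∑ i, (score G ω i) ^ 2 ∂μ) / η ^ 2 := by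
      intro G
      have h := mul_meas_ge_le_integral_of_nonneg
        (Filter.Eventually.of_forall
          (fun ω => Finset.sum_nonneg fun i _ => sq_nonneg (score G ω i)))
        (intS G) (η ^ 2)
      rw [le_div_iff₀ (by positivity : (0:ℝ) < η ^ 2)]
      rw [measureReal_def] at h
      linarith
    have hle : ∀ G : ℕ, μ {ω | η ≤ Real.sqrt (∑ i, (score G ω i) ^ 2)} ≤
        ENNReal.ofReal ((∫ ω, ∑ i, (score G ω i) ^ 2 ∂μ) / η ^ 2) := by
      intro G
      rw [hseteq G, ← ENNReal.ofReal_toReal (measure_ne_top μ _)]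
      exact ENNReal.ofReal_le_ofReal (hmark G)
    have hup : Tendsto (fun G : ℕ =>
        ENNReal.ofReal ((∫ ω, ∑ i, (score G ω i) ^ 2 ∂μ) / η ^ 2)) atTop (nhds 0) := by
      have h2 : Tendsto (fun G : ℕ => (∫ ω, ∑ i, (score G ω i) ^ 2 ∂μ) / η ^ 2)
          atTop (nhds 0) := by
        simpa using hI0.div_const (η ^ 2)
      have h3 := ENNReal.tendsto_ofReal h2
      simpa using h3
    exact tendsto_of_tendsto_of_tendsto_of_le_of_le tendsto_const_nhds hup
      (fun G => zero_le) hle
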